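/- Let n ≥ 1, let X = {0,1}^n with Hamming distance d, let 0 < p < 1/2, and set P(y|x) = p^{d(x,y)}(1−p)^{n−d(x,y)}. Let C ⊆ X be a code, dec : X → C a maximum-likelihood decoder, x_i ∈ C, and P_e(x_i) = Σ_{y : dec(y) ≠ x_i} P(y|x_i). Fix 1 ≤ w ≤ n, let C(i) = { x ∈ C : d(x, x_i) = w }, and for x_j ∈ C(i) set X_{ij} = { y ∈ X : d(x_j, y) < d(x_i, y) }. Let η : {0, 1, …, n} → ℝ_{≥0} be any weight function such that Σ_{y ∈ X_{ij}} P(y|x_i) η(d(x_i,y))^2 > 0 for every x_j ∈ C(i). Then P_e(x_i) ≥ Σ_{x_j ∈ C(i)} ( Σ_{y ∈ X_{ij}} P(y|x_i) η(d(x_i,y)) )^2 / ( Σ_{x_k ∈ C(i)} Σ_{y ∈ X_{ij} ∩ X_{ik}} P(y|x_i) η(d(x_i,y))^2 ). -/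

import Mathlib

open Finset

/-- Transition probabilities of the binary symmetric channel with crossover
probability `p`: `P(y|x) = p^{d(x,y)} (1-p)^{n-d(x,y)}`. -/
noncomputable def bscProb (n : ℕ) (p : ℝ) (x y : Fin n → Bool) : ℝ :=
  p ^ hammingDist x y * (1 - p) ^ (n - hammingDist x y)

/-- Error probability of decoding with decoder `dec` given that `xi` was sent:
`P_e(x_i) = ∑_{y : dec y ≠ x_i} P(y|x_i)`. -/
noncomputable def errProb (n : ℕ) (p : ℝ)
    (dec : (Fin n → Bool) → (Fin n → Bool)) (xi : Fin n → Bool) : ℝ :=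
  ∑ y ∈ Finset.univ.filter (fun y => dec y ≠ xi), bscProb n p xi y

/-- The half-space event `X_{ij} = {y : d(x_j, y) < d(x_i, y)}`. -/
def halfSpace (n : ℕ) (xi xj : Fin n → Bool) : Finset (Fin n → Bool) :=
  Finset.univ.filter (fun y => hammingDist xj y < hammingDist xi y)

/-- **The Cohen–Merhav lower bound** on the maximum-likelihood decoding error
probability of a code on the BSC, obtained from the weighted generalization of
de Caen's inequality applied to the half-space events `X_{ij}` over the codewords
`x_j` at distance `w` from the transmitted codeword `x_i`, with an arbitrary
nonnegative weight function `η`. -/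
theorem cohen_merhav_bound_bsc
    (n : ℕ) (hn : 1 ≤ n) (p : ℝ) (hp0 : 0 < p) (hp : p < 1 / 2)
    (C : Finset (Fin n → Bool))
    (dec : (Fin n → Bool) → (Fin n → Bool))
    (hdecC : ∀ y, dec y ∈ C)
    (hML : ∀ y, ∀ x ∈ C, hammingDist y (dec y) ≤ hammingDist y x)
    (xi : Fin n → Bool) (hxi : xi ∈ C)
    (w : ℕ) (hw1 : 1 ≤ w) (hwn : w ≤ n)
    (η : ℕ → ℝ) (hη : ∀ t, 0 ≤ η t)
    (hpos : ∀ xj ∈ C.filter (fun x => hammingDist x xi = w),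
      0 < ∑ y ∈ halfSpace n xi xj, bscProb n p xi y * η (hammingDist xi y) ^ 2) :
    ∑ xj ∈ C.filter (fun x => hammingDist x xi = w),
        (∑ y ∈ halfSpace n xi xj, bscProb n p xi y * η (hammingDist xi y)) ^ 2
          / (∑ xk ∈ C.filter (fun x => hammingDist x xi = w),
              ∑ y ∈ halfSpace n xi xj ∩ halfSpace n xi xk,
                bscProb n p xi y * η (hammingDist xi y) ^ 2)
      ≤ errProb n p dec xi := by
  classical
  set S := C.filter (fun x => hammingDist x xi = w) with hS
  set A : (Fin n → Bool) → Finset (Fin n → Bool) := fun j => halfSpace n xi j with hA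
  set b : (Fin n → Bool) → ℝ := fun y => bscProb n p xi y with hb
  set h : (Fin n → Bool) → ℝ := fun y => b y * η (hammingDist xi y) ^ 2 with hh
  -- multiplicity
  set m : (Fin n → Bool) → ℕ := fun y => (S.filter (fun k => y ∈ A k)).card with hm
  have hbnonneg : ∀ y, 0 ≤ b y := by
    intro y
    exact mul_nonneg (pow_nonneg hp0.le _) (pow_nonneg (by linarith) _)
  have hhnonneg : ∀ y, 0 ≤ h y := fun y => mul_nonneg (hbnonneg y) (sq_nonneg _)
  -- swapping lemma
  have hswap : ∀ (T : Finset (Fin n → Bool)) (F : (Fin n → Bool) → ℝ),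
      ∑ k ∈ S, ∑ y ∈ T ∩ A k, F y = ∑ y ∈ T, (m y : ℝ) * F y := by
    intro T F
    have : ∀ k, T ∩ A k = T.filter (fun y => y ∈ A k) := by
      intro k; rw [Finset.filter_mem_eq_inter]
    simp_rw [this, Finset.sum_filter]
    rw [Finset.sum_comm]
    refine Finset.sum_congr rfl fun y _ => ?_
    rw [← Finset.sum_filter, Finset.sum_const, nsmul_eq_mul]
  -- membership in A k implies m ≥ 1
  have hm1 : ∀ j ∈ S, ∀ y ∈ A j, 1 ≤ m y := by
    intro j hj y hy
    have : j ∈ S.filter (fun k => y ∈ A k) := Finset.mem_filter.2 ⟨hj, hy⟩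
    exact Finset.card_pos.2 ⟨j, this⟩
  -- error event
  have herr : ∀ y, 1 ≤ m y → dec y ≠ xi := by
    intro y hy
    obtain ⟨k, hk⟩ := Finset.card_pos.1 hy
    rw [Finset.mem_filter] at hk
    obtain ⟨hkS, hkA⟩ := hk
    have hkC : k ∈ C := (Finset.mem_filter.1 hkS).1
    have hlt : hammingDist k y < hammingDist xi y := by
      simpa [hA, halfSpace] using hkA
    intro hcontra
    have h1 : hammingDist y (dec y) ≤ hammingDist y k := hML y k hkC
    rw [hcontra] at h1
    rw [hammingDist_comm y xi, hammingDist_comm y k] at h1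
    omega
  -- per-j Cauchy–Schwarz bound
  have hCS : ∀ j ∈ S,
      (∑ y ∈ A j, b y * η (hammingDist xi y)) ^ 2
        ≤ (∑ y ∈ A j, b y / (m y : ℝ)) * (∑ y ∈ A j, (m y : ℝ) * h y) := by
    intro j hj
    refine Finset.sum_sq_le_sum_mul_sum_of_sq_eq_mul (A j)
      (fun y _ => div_nonneg (hbnonneg y) (Nat.cast_nonneg _))
      (fun y _ => mul_nonneg (Nat.cast_nonneg _) (hhnonneg y))
      (fun y hy => ?_)
    have hmy : (0 : ℝ) < (m y : ℝ) := by
      exact_mod_cast Nat.lt_of_lt_of_le Nat.zero_lt_one (hm1 j hj y hy)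
    field_simp [hh]
    ring
  -- the denominator equals ∑_{y ∈ A j} m y * h y, and is positive
  have hden : ∀ j ∈ S,
      ∑ xk ∈ S, ∑ y ∈ A j ∩ A xk, h y = ∑ y ∈ A j, (m y : ℝ) * h y := fun j _ =>
    hswap (A j) h
  have hdenpos : ∀ j ∈ S, 0 < ∑ y ∈ A j, (m y : ℝ) * h y := by
    intro j hj
    have := hpos j hj
    calc (0:ℝ) < ∑ y ∈ A j, h y := this
      _ ≤ ∑ y ∈ A j, (m y : ℝ) * h y := by
          refine Finset.sum_le_sum fun y hy => ?_
          have h1 : (1 : ℝ) ≤ (m y : ℝ) := by exact_mod_cast hm1 j hj y hy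
          nlinarith [hhnonneg y]
  calc ∑ xj ∈ S, (∑ y ∈ A xj, b y * η (hammingDist xi y)) ^ 2
          / (∑ xk ∈ S, ∑ y ∈ A xj ∩ A xk, h y)
      ≤ ∑ j ∈ S, ∑ y ∈ A j, b y / (m y : ℝ) := by
        refine Finset.sum_le_sum fun j hj => ?_
        rw [hden j hj]
        rw [div_le_iff₀ (hdenpos j hj)]
        exact hCS j hj
    _ = ∑ y ∈ Finset.univ, (m y : ℝ) * (b y / (m y : ℝ)) := by
        have := hswap Finset.univ (fun y => b y / (m y : ℝ))
        simpa [Finset.univ_inter, Finset.inter_comm] using this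
    _ ≤ errProb n p dec xi := by
        rw [errProb, Finset.sum_filter]
        refine Finset.sum_le_sum fun y _ => ?_
        by_cases hmy : 1 ≤ m y
        · have hmy' : (m y : ℝ) ≠ 0 := by
            have : 0 < m y := hmy
            exact_mod_cast this.ne'
          rw [mul_div_cancel₀ _ hmy']
          simp [herr y hmy, hb]
        · have : m y = 0 := by omega
          simp only [this, Nat.cast_zero, zero_mul]
          split <;> [exact hbnonneg y; rfl]
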